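/- Let Z be a metric space and A, B ⊆ Z. Let 𝒰 be an open covering of A and 𝒱 an open covering of B (by open subsets of Z), both with multiplicity at most m. If mesh(𝒱) ≤ L(𝒰)/2, then there exists an open covering 𝒲 of A ∪ B with multiplicity at most m, mesh(𝒲) ≤ max{mesh(𝒱), mesh(𝒰)}, and L(𝒲) ≥ min{L(𝒰)/2, L(𝒱)}. -/

import Mathlib

open Metric Set Filter ENNReal NNReal

noncomputable section

namespace PaperDefs

/-! ### Coverings: mesh, Lebesgue number, colorings, multiplicity -/

/-- The mesh of a family of subsets of a metric space. -/
def meshF {Z : Type*} [PseudoMetricSpace Z] (U : Set (Set Z)) : ℝ≥0∞ :=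
  ⨆ V ∈ U, EMetric.diam V

/-- The Lebesgue number of a family `U` as a covering of `A`:
`inf_{z ∈ A} sup_{V ∈ U} dist (z, Z \ V)`. -/
def lebesgueF {Z : Type*} [PseudoMetricSpace Z] (U : Set (Set Z)) (A : Set Z) : ℝ≥0∞ :=
  ⨅ z ∈ A, ⨆ V ∈ U, EMetric.infEdist z Vᶜ

def IsOpenFamily {Z : Type*} [TopologicalSpace Z] (U : Set (Set Z)) : Prop :=
  ∀ V ∈ U, IsOpen V

def IsCoveringOf {Z : Type*} (U : Set (Set Z)) (A : Set Z) : Prop :=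
  A ⊆ ⋃₀ U

/-- A family is `m`-colored if it is a union of `m` families, each consisting of
pairwise disjoint sets. -/
def IsColored {Z : Type*} (U : Set (Set Z)) (m : ℕ) : Prop :=
  ∃ F : Fin m → Set (Set Z), U = ⋃ i, F i ∧ ∀ i, (F i).Pairwise Disjoint

/-- The multiplicity of a family is at most `m`: any collection of its members with a
common point has cardinality at most `m`. -/
def MultiplicityLE {Z : Type*} (U : Set (Set Z)) (m : ℕ) : Prop :=
  ∀ s : Finset (Set Z), ↑s ⊆ U → (⋂₀ (s : Set (Set Z))).Nonempty → s.card ≤ m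

/-- An `(L, M, n)`-covering of `A`: an open `n`-colored covering with mesh at most `M`
and Lebesgue number at least `L`. -/
def IsLMNCover {Z : Type*} [PseudoMetricSpace Z] (U : Set (Set Z)) (A : Set Z)
    (L M : ℝ) (n : ℕ) : Prop :=
  IsOpenFamily U ∧ IsCoveringOf U A ∧ IsColored U n ∧
    meshF U ≤ ENNReal.ofReal M ∧ ENNReal.ofReal L ≤ lebesgueF U A

/-! ### Dimensions -/

/-- `ℓ-dim Z ≤ k`. -/
def ElldimLE (Z : Type*) [PseudoMetricSpace Z] (k : ℕ) : Prop :=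
  ∃ δ : ℝ, δ ∈ Set.Ioo (0:ℝ) 1 ∧ ∃ τ₀ : ℝ, 0 < τ₀ ∧ ∀ τ : ℝ, 0 < τ → τ < τ₀ →
    ∃ U : Set (Set Z), IsLMNCover U Set.univ (δ * τ) τ (k + 1)

/-- The linearly controlled dimension of a metric space. -/
def elldim (Z : Type*) [PseudoMetricSpace Z] : ℕ∞ :=
  sInf {n : ℕ∞ | ∃ k : ℕ, n = k ∧ ElldimLE Z k}

/-- `asdim X ≤ m`. -/
def AsdimLE (X : Type*) [PseudoMetricSpace X] (m : ℕ) : Prop :=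
  ∀ d : ℝ, 0 < d → ∃ U : Set (Set X), IsOpenFamily U ∧ IsCoveringOf U Set.univ ∧
    MultiplicityLE U (m + 1) ∧ meshF U < ⊤ ∧ ENNReal.ofReal d ≤ lebesgueF U Set.univ

/-- The asymptotic dimension of a metric space. -/
def asdim (X : Type*) [PseudoMetricSpace X] : ℕ∞ :=
  sInf {n : ℕ∞ | ∃ m : ℕ, n = m ∧ AsdimLE X m}

/-- `ℓ-asdim X ≤ n`. -/
def LasdimLE (X : Type*) [PseudoMetricSpace X] (n : ℕ) : Prop :=
  ∃ C : ℝ, 1 < C ∧ ∃ d₀ : ℝ, ∀ d : ℝ, d₀ ≤ d →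
    ∃ U : Set (Set X), IsLMNCover U Set.univ d (C * d) (n + 1)

/-- The linearly controlled asymptotic dimension of a metric space. -/
def lasdim (X : Type*) [PseudoMetricSpace X] : ℕ∞ :=
  sInf {n : ℕ∞ | ∃ m : ℕ, n = m ∧ LasdimLE X m}

/-- Topological covering dimension `≤ m`: every open covering admits an open refinement of
multiplicity at most `m + 1`. -/
def CovDimLE (Z : Type*) [TopologicalSpace Z] (m : ℕ) : Prop :=
  ∀ U : Set (Set Z), IsOpenFamily U → IsCoveringOf U Set.univ →
    ∃ V : Set (Set Z), IsOpenFamily V ∧ IsCoveringOf V Set.univ ∧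
      (∀ W ∈ V, ∃ W' ∈ U, W ⊆ W') ∧ MultiplicityLE V (m + 1)

/-- Topological covering dimension. -/
def covDim (Z : Type*) [TopologicalSpace Z] : ℕ∞ :=
  sInf {n : ℕ∞ | ∃ m : ℕ, n = m ∧ CovDimLE Z m}

/-! ### Scaled metric spaces and uniform `ℓ-dim` for families -/

/-- `Scaled a X` is the metric space obtained from `X` by multiplying all distances by `a`. -/
def Scaled (a : ℝ≥0) (X : Type*) : Type _ := X

def Scaled.unmk {a : ℝ≥0} {X : Type*} (x : Scaled a X) : X := x

def Scaled.dist' (a : ℝ≥0) {X : Type*} [PseudoMetricSpace X] (x y : Scaled a X) : ℝ :=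
  a * dist x.unmk y.unmk

noncomputable instance Scaled.pseudoMetricSpace (a : ℝ≥0) (X : Type*) [PseudoMetricSpace X] :
    PseudoMetricSpace (Scaled a X) where
  dist := Scaled.dist' a
  dist_self x := by simp [Scaled.dist']
  dist_comm x y := by simp [Scaled.dist', dist_comm]
  dist_triangle x y z := by
    have h := dist_triangle x.unmk y.unmk z.unmk
    have h2 := mul_le_mul_of_nonneg_left h a.coe_nonneg
    simp only [Scaled.dist']
    calc (a : ℝ) * dist x.unmk z.unmk ≤ a * (dist x.unmk y.unmk + dist y.unmk z.unmk) := h2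
      _ = a * dist x.unmk y.unmk + a * dist y.unmk z.unmk := by ring

/-- A family of metric spaces has `ℓ-dim ≤ k` uniformly. -/
def UnifElldimLE {ι : Type*} (Z : ι → Type*) [∀ i, PseudoMetricSpace (Z i)] (k : ℕ) : Prop :=
  ∃ δ : ℝ, δ ∈ Set.Ioo (0:ℝ) 1 ∧ ∃ τ₀ : ℝ, 0 < τ₀ ∧ ∀ τ : ℝ, 0 < τ → τ < τ₀ → ∀ i : ι,
    ∃ U : Set (Set (Z i)), IsLMNCover U Set.univ (δ * τ) τ (k + 1)

/-! ### `mesh^×` and `L^×` for products -/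

/-- `mesh^× U ≤ (p, q)`. -/
def MeshProdLE {X Y : Type*} [PseudoMetricSpace X] [PseudoMetricSpace Y]
    (U : Set (Set (X × Y))) (p q : ℝ) : Prop :=
  ∀ V ∈ U, ∃ x : X, ∃ y : Y, V ⊆ closedBall x p ×ˢ closedBall y q

/-- `L^× U ≥ (p, q)`. -/
def LProdGE {X Y : Type*} [PseudoMetricSpace X] [PseudoMetricSpace Y]
    (U : Set (Set (X × Y))) (p q : ℝ) : Prop :=
  ∀ z : X × Y, ∃ V ∈ U, closedBall z.1 p ×ˢ closedBall z.2 q ⊆ V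

/-- pointed `mesh^× (U, z) ≤ (p, q)`. -/
def MeshProdAtLE {X Y : Type*} [PseudoMetricSpace X] [PseudoMetricSpace Y]
    (U : Set (Set (X × Y))) (z : X × Y) (p q : ℝ) : Prop :=
  ∀ V ∈ U, z ∈ V → ∃ x : X, ∃ y : Y, V ⊆ closedBall x p ×ˢ closedBall y q

/-- pointed `L^× (U, z) ≥ (p, q)`. -/
def LProdAtGE {X Y : Type*} [PseudoMetricSpace X] [PseudoMetricSpace Y]
    (U : Set (Set (X × Y))) (z : X × Y) (p q : ℝ) : Prop :=
  ∃ V ∈ U, closedBall z.1 p ×ˢ closedBall z.2 q ⊆ V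

/-! ### Hyperbolic spaces and their boundaries -/

/-- The Gromov product `(x|y)_o`. -/
def gromov {Z : Type*} [PseudoMetricSpace Z] (o x y : Z) : ℝ :=
  (dist x o + dist y o - dist x y) / 2

/-- `X` is `δ`-hyperbolic. -/
def IsDeltaHyperbolic (X : Type*) [PseudoMetricSpace X] (δ : ℝ) : Prop :=
  0 ≤ δ ∧ ∀ o x y z : X, min (gromov o x z) (gromov o z y) - δ ≤ gromov o x y

/-- `X` is Gromov hyperbolic. -/
def GromovHyperbolic (X : Type*) [PseudoMetricSpace X] : Prop :=
  ∃ δ : ℝ, IsDeltaHyperbolic X δ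

/-- A sequence converges at infinity if `liminf_{i,j → ∞} (x_i | x_j)_o = ∞`. -/
def ConvAtInf {X : Type*} [PseudoMetricSpace X] (o : X) (x : ℕ → X) : Prop :=
  Tendsto (fun p : ℕ × ℕ => gromov o (x p.1) (x p.2)) (atTop ×ˢ atTop) atTop

/-- Sequences converging at infinity. -/
def BdrySeq (X : Type*) [PseudoMetricSpace X] (o : X) := {x : ℕ → X // ConvAtInf o x}

/-- Equivalence of sequences converging at infinity. -/
def bdryRel (X : Type*) [PseudoMetricSpace X] (o : X) (x y : BdrySeq X o) : Prop :=
  Tendsto (fun p : ℕ × ℕ => gromov o (x.1 p.1) (y.1 p.2)) (atTop ×ˢ atTop) atTop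

/-- The boundary at infinity of `X` (with respect to the base point `o`). -/
def Boundary (X : Type*) [PseudoMetricSpace X] (o : X) := Quot (bdryRel X o)

/-- The Gromov product of two boundary points. -/
def bGromov {X : Type*} [PseudoMetricSpace X] (o : X) (ξ η : Boundary X o) : ℝ :=
  sInf {t : ℝ | ∃ x y : BdrySeq X o, Quot.mk (bdryRel X o) x = ξ ∧ Quot.mk (bdryRel X o) y = η ∧
    t = liminf (fun p : ℕ × ℕ => gromov o (x.1 p.1) (y.1 p.2)) (atTop ×ˢ atTop)}

/-- The Gromov product of a point of the space and a boundary point. -/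
def mGromov {X : Type*} [PseudoMetricSpace X] (o : X) (x : X) (ξ : Boundary X o) : ℝ :=
  sInf {t : ℝ | ∃ y : BdrySeq X o, Quot.mk (bdryRel X o) y = ξ ∧
    t = liminf (fun j : ℕ => gromov o x (y.1 j)) atTop}

/-- A hyperbolic space is visual. -/
def IsVisualSpace (X : Type*) [PseudoMetricSpace X] : Prop :=
  ∃ x₀ : X, ∃ D : ℝ, 0 < D ∧ ∀ x : X, ∃ ξ : Boundary X x₀,
    dist x x₀ ≤ mGromov x₀ x ξ + D

/-- `B` is a copy of the boundary at infinity of `X` (realized by the bijection `φ`)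
equipped with a visual metric. -/
def IsVisualBoundary (X : Type*) [PseudoMetricSpace X] (o : X)
    (B : Type*) [PseudoMetricSpace B] (φ : B ≃ Boundary X o) : Prop :=
  ∃ a : ℝ, 1 < a ∧ ∃ c₁ c₂ : ℝ, 0 < c₁ ∧ 0 < c₂ ∧ ∀ ξ ξ' : B,
    c₁ * a ^ (-(bGromov o (φ ξ) (φ ξ'))) ≤ dist ξ ξ' ∧
    dist ξ ξ' ≤ c₂ * a ^ (-(bGromov o (φ ξ) (φ ξ')))

/-- A geodesic from `x` to `y`: an isometric parametrization of `[0, dist x y]`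
sending `0` to `x` and `dist x y` to `y`. -/
def IsGeodesicFrom {Z : Type*} [PseudoMetricSpace Z] (f : ℝ → Z) (x y : Z) : Prop :=
  f 0 = x ∧ f (dist x y) = y ∧ ∀ s ∈ Set.Icc (0:ℝ) (dist x y), ∀ t ∈ Set.Icc (0:ℝ) (dist x y),
    dist (f s) (f t) = |s - t|

/-- A geodesic metric space. -/
def IsGeodesicSpace (X : Type*) [PseudoMetricSpace X] : Prop :=
  ∀ x y : X, ∃ f : ℝ → X, IsGeodesicFrom f x y

/-! ### Word metrics and hyperbolic groups -/

/-- The word length of `g` with respect to the (symmetrized) generating set `S`. -/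
def wordLength {G : Type*} [Group G] (S : Set G) (g : G) : ℕ :=
  sInf {n : ℕ | ∃ w : List G, w.length = n ∧ (∀ s ∈ w, s ∈ S ∨ s⁻¹ ∈ S) ∧ w.prod = g}

/-- The metric on `G` is the word metric of the finite generating set `S`. -/
def IsWordMetric {G : Type*} [Group G] [PseudoMetricSpace G] (S : Set G) : Prop :=
  S.Finite ∧ Subgroup.closure S = ⊤ ∧ ∀ g h : G, dist g h = wordLength S (g⁻¹ * h)

/-! ### Hyperbolic cones -/

/-- The inverse hyperbolic cosine. -/
def arcosh (x : ℝ) : ℝ := Real.log (x + Real.sqrt (x ^ 2 - 1))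

/-- The hyperbolic cone distance between points of `Z × [0, ∞)`, where `Z` is a bounded
metric space of positive diameter:
`cosh d = cosh t · cosh t' − sinh t · sinh t' · cos (μ |z z'|)` with `μ = π / diam Z`. -/
def coneDist {Z : Type*} [PseudoMetricSpace Z] (p q : Z × ℝ≥0) : ℝ :=
  arcosh (Real.cosh p.2 * Real.cosh q.2 -
    Real.sinh p.2 * Real.sinh q.2 *
      Real.cos (Real.pi / Metric.diam (Set.univ : Set Z) * dist p.1 q.1))

/-- `C` is (a realization of) the hyperbolic cone over `Z`: `h` is the canonical projection
of `Z × [0, ∞)` onto `C = Z × [0,∞) / Z × {0}`, and the metric of `C` is the hyperbolic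
cone metric. -/
def IsHypCone (Z : Type*) [PseudoMetricSpace Z] (C : Type*) [PseudoMetricSpace C]
    (h : Z × ℝ≥0 → C) : Prop :=
  Function.Surjective h ∧ ∀ p q : Z × ℝ≥0, dist (h p) (h q) = coneDist p q

/-- A metric space is locally self-similar. -/
def LocallySelfSimilar (Z : Type*) [PseudoMetricSpace Z] : Prop :=
  ∃ lam : ℝ, 1 ≤ lam ∧ ∃ R₀ : ℝ, 1 < R₀ ∧ ∀ R : ℝ, R₀ ≤ R → ∀ A : Set Z,
    Metric.diam A ≤ 1 / R → ∃ f : A → Z, ∀ x y : A,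
      R * dist (x : Z) (y : Z) / lam ≤ dist (f x) (f y) ∧
      dist (f x) (f y) ≤ lam * R * dist (x : Z) (y : Z)

end PaperDefs

open PaperDefs

open EMetric

private lemma union_skeleton
    {Z : Type*} [MetricSpace Z] (A B : Set Z) (m : ℕ) (U V : Set (Set Z))
    (hUopen : IsOpenFamily U) (hUcov : IsCoveringOf U A)
    (hVopen : IsOpenFamily V) (hVcov : IsCoveringOf V B)
    (hUm : MultiplicityLE U m) (hVm : MultiplicityLE V m)
    (N : Set Z) (hN : IsOpen N) (hAN : A ⊆ N)
    (habs : ∀ V' ∈ V, (V' ∩ N).Nonempty → ∃ U' ∈ U, V' ⊆ U') :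
    ∃ W : Set (Set Z), IsOpenFamily W ∧ IsCoveringOf W (A ∪ B) ∧ MultiplicityLE W m ∧
      meshF W ≤ max (meshF V) (meshF U) ∧
      min (⨅ z ∈ A, min (⨆ U' ∈ U, infEdist z U'ᶜ) (infEdist z Nᶜ)) (lebesgueF V B)
        ≤ lebesgueF W (A ∪ B) := by
  classical
  have habs' : ∀ V' : Set Z, ∃ U', (V' ∈ V ∧ (V' ∩ N).Nonempty) → U' ∈ U ∧ V' ⊆ U' := by
    intro V'
    by_cases h : V' ∈ V ∧ (V' ∩ N).Nonempty
    · obtain ⟨U', hU', hsub⟩ := habs V' h.1 h.2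
      exact ⟨U', fun _ => ⟨hU', hsub⟩⟩
    · exact ⟨∅, fun hc => absurd hc h⟩
  choose f hf using habs'
  set tld : Set Z → Set Z :=
    fun U' => (U' ∩ N) ∪ ⋃₀ {V' | (V' ∈ V ∧ (V' ∩ N).Nonempty) ∧ f V' = U'} with htld
  set W : Set (Set Z) := (tld '' U) ∪ {V' | V' ∈ V ∧ V' ∩ N = ∅} with hW
  have htld_sub : ∀ U', tld U' ⊆ U' := by
    intro U' z hz
    rcases hz with hz | hz
    · exact hz.1
    · obtain ⟨V', ⟨hV'a, hfV⟩, hzV⟩ := hz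
      exact hfV ▸ (hf V' hV'a).2 hzV
  have hVsub_tld : ∀ V', (V' ∈ V ∧ (V' ∩ N).Nonempty) → V' ⊆ tld (f V') := by
    intro V' h z hz
    exact Or.inr ⟨V', ⟨h, rfl⟩, hz⟩
  have hWopen : IsOpenFamily W := by
    rintro W' (⟨U', hU', rfl⟩ | hV')
    · exact ((hUopen U' hU').inter hN).union
        (isOpen_sUnion fun V' hV' => hVopen V' hV'.1.1)
    · exact hVopen _ hV'.1
  have hWcov : IsCoveringOf W (A ∪ B) := by
    rintro z (hz | hz)
    · obtain ⟨U', hU', hzU⟩ := hUcov hz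
      exact ⟨tld U', Or.inl ⟨U', hU', rfl⟩, Or.inl ⟨hzU, hAN hz⟩⟩
    · obtain ⟨V', hV', hzV⟩ := hVcov hz
      by_cases hVN : (V' ∩ N).Nonempty
      · exact ⟨tld (f V'), Or.inl ⟨f V', (hf V' ⟨hV', hVN⟩).1, rfl⟩,
          hVsub_tld V' ⟨hV', hVN⟩ hzV⟩
      · exact ⟨V', Or.inr ⟨hV', Set.not_nonempty_iff_eq_empty.mp hVN⟩, hzV⟩
  have hWm : MultiplicityLE W m := by
    rintro s hs ⟨z, hz⟩
    have hzmem : ∀ W' ∈ s, z ∈ W' := fun W' h => hz W' h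
    by_cases hzN : z ∈ N
    · have key : ∀ W' ∈ s, ∃ U', U' ∈ U ∧ tld U' = W' ∧ z ∈ U' := by
        intro W' hW's
        rcases hs hW's with ⟨U', hU', rfl⟩ | hV'
        · refine ⟨U', hU', rfl, ?_⟩
          rcases hzmem _ hW's with hz1 | hz2
          · exact hz1.1
          · obtain ⟨V', ⟨hV'a, hfV⟩, hzV⟩ := hz2
            exact hfV ▸ (hf V' hV'a).2 hzV
        · exact absurd (hV'.2 ▸ Set.mem_inter (hzmem _ hW's) hzN) (Set.notMem_empty z)
      choose! g hg1 hg2 hg3 using key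
      have hinj : Set.InjOn g ↑s := by
        intro W1 h1 W2 h2 hgeq
        rw [← hg2 W1 h1, ← hg2 W2 h2, hgeq]
      calc s.card = (s.image g).card := (Finset.card_image_of_injOn hinj).symm
        _ ≤ m := by
            refine hUm _ ?_ ⟨z, ?_⟩
            · intro x hx
              simp only [Finset.coe_image, Set.mem_image, Finset.mem_coe] at hx
              obtain ⟨W', hW', rfl⟩ := hx
              exact hg1 W' hW'
            · intro x hx
              simp only [Finset.coe_image, Set.mem_image, Finset.mem_coe] at hx
              obtain ⟨W', hW', rfl⟩ := hx
              exact hg3 W' hW'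
    · have key : ∀ W' ∈ s, ∃ V'', V'' ∈ V ∧ z ∈ V'' ∧
          ((W' = V'' ∧ V'' ∩ N = ∅) ∨ ((V'' ∩ N).Nonempty ∧ W' = tld (f V''))) := by
        intro W' hW's
        rcases hs hW's with ⟨U', hU', rfl⟩ | hV'
        · rcases hzmem _ hW's with hz1 | hz2
          · exact absurd hz1.2 hzN
          · obtain ⟨V'', ⟨hV''a, hfV⟩, hzV⟩ := hz2
            exact ⟨V'', hV''a.1, hzV, Or.inr ⟨hV''a.2, by rw [hfV]⟩⟩
        · exact ⟨W', hV'.1, hzmem _ hW's, Or.inl ⟨rfl, hV'.2⟩⟩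
      choose! g hg1 hg2 hg3 using key
      have hinj : Set.InjOn g ↑s := by
        intro W1 h1 W2 h2 hgeq
        rcases hg3 W1 h1 with ⟨e1, d1⟩ | ⟨n1, e1⟩ <;>
          rcases hg3 W2 h2 with ⟨e2, d2⟩ | ⟨n2, e2⟩
        · rw [e1, e2, hgeq]
        · rw [← hgeq, d1] at n2
          exact absurd n2 Set.not_nonempty_empty
        · rw [hgeq, d2] at n1
          exact absurd n1 Set.not_nonempty_empty
        · rw [e1, e2, hgeq]
      calc s.card = (s.image g).card := (Finset.card_image_of_injOn hinj).symm
        _ ≤ m := by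
            refine hVm _ ?_ ⟨z, ?_⟩
            · intro x hx
              simp only [Finset.coe_image, Set.mem_image, Finset.mem_coe] at hx
              obtain ⟨W', hW', rfl⟩ := hx
              exact hg1 W' hW'
            · intro x hx
              simp only [Finset.coe_image, Set.mem_image, Finset.mem_coe] at hx
              obtain ⟨W', hW', rfl⟩ := hx
              exact hg2 W' hW'
  have hWmesh : meshF W ≤ max (meshF V) (meshF U) := by
    refine iSup₂_le ?_
    rintro W' (⟨U', hU', rfl⟩ | hV')
    · exact le_max_of_le_right ((EMetric.diam_mono (htld_sub U')).trans
        (le_iSup₂ (f := fun (V' : Set Z) (_ : V' ∈ U) => EMetric.diam V') U' hU'))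
    · exact le_max_of_le_left
        (le_iSup₂ (f := fun (V' : Set Z) (_ : V' ∈ V) => EMetric.diam V') W' hV'.1)
  refine ⟨W, hWopen, hWcov, hWm, hWmesh, ?_⟩
  rw [lebesgueF]
  refine le_iInf₂ ?_
  rintro z (hzA | hzB)
  · refine le_trans (min_le_left _ _) (le_trans (iInf₂_le z hzA) ?_)
    have hdistrib : min (⨆ U' ∈ U, infEdist z U'ᶜ) (infEdist z Nᶜ)
        = ⨆ U' ∈ U, min (infEdist z U'ᶜ) (infEdist z Nᶜ) := by
      rw [min_comm]
      simp only [inf_iSup_eq, min_comm]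
    rw [hdistrib]
    refine iSup₂_le fun U' hU' => ?_
    have h1 : min (infEdist z U'ᶜ) (infEdist z Nᶜ) = infEdist z (U' ∩ N)ᶜ := by
      rw [Set.compl_inter]
      exact infEdist_union.symm
    rw [h1]
    refine le_trans (infEdist_anti (Set.compl_subset_compl.mpr
      (Set.subset_union_left.trans_eq rfl : U' ∩ N ⊆ tld U'))) ?_
    exact le_iSup₂ (f := fun (W' : Set Z) (_ : W' ∈ W) => infEdist z W'ᶜ)
      (tld U') (Or.inl ⟨U', hU', rfl⟩)
  · refine le_trans (min_le_right _ _) (le_trans (iInf₂_le z hzB) ?_)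
    refine iSup₂_le fun V' hV' => ?_
    by_cases hVN : (V' ∩ N).Nonempty
    · refine le_trans (infEdist_anti (Set.compl_subset_compl.mpr
        (hVsub_tld V' ⟨hV', hVN⟩))) ?_
      exact le_iSup₂ (f := fun (W' : Set Z) (_ : W' ∈ W) => infEdist z W'ᶜ)
        (tld (f V')) (Or.inl ⟨f V', (hf V' ⟨hV', hVN⟩).1, rfl⟩)
    · exact le_iSup₂ (f := fun (W' : Set Z) (_ : W' ∈ W) => infEdist z W'ᶜ)
        V' (Or.inr ⟨hV', Set.not_nonempty_iff_eq_empty.mp hVN⟩)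

private lemma exists_univ_mem
    {Z : Type*} [MetricSpace Z] {A : Set Z} {U : Set (Set Z)} {m : ℕ} {a : Z}
    (hUm : MultiplicityLE U m) (ha : a ∈ A) (hLtop : lebesgueF U A = ⊤) :
    Set.univ ∈ U := by
  classical
  have hS : {U' | U' ∈ U ∧ a ∈ U'}.Finite := by
    by_contra hinf
    have hinf' : {U' | U' ∈ U ∧ a ∈ U'}.Infinite := hinf
    obtain ⟨t, hts, htc⟩ := hinf'.exists_subset_card_eq (m + 1)
    have hts' : ∀ x ∈ t, x ∈ U ∧ a ∈ x := fun x hx => hts hx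
    have := hUm t (fun x hx => (hts' x hx).1) ⟨a, fun x hx => (hts' x hx).2⟩
    omega
  have hsup : (⨆ U' ∈ U, infEdist a U'ᶜ) = ⊤ := by
    refine top_unique ?_
    calc (⊤ : ℝ≥0∞) = lebesgueF U A := hLtop.symm
      _ ≤ ⨆ U' ∈ U, infEdist a U'ᶜ := iInf₂_le a ha
  by_contra hnu
  set F := hS.toFinset with hF
  have hMlt : F.sup (fun U' => infEdist a U'ᶜ) < ⊤ := by
    refine Finset.sup_lt_iff (by simp) |>.mpr ?_
    intro U' hU'
    rw [hF, Set.Finite.mem_toFinset] at hU'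
    rcases lt_or_eq_of_le (le_top : infEdist a U'ᶜ ≤ ⊤) with h | h
    · exact h
    · exfalso
      have hUc : U'ᶜ = ∅ := by
        by_contra hne
        obtain ⟨w, hw⟩ := Set.nonempty_iff_ne_empty.mpr hne
        exact absurd h (by
          refine ne_of_lt (lt_of_le_of_lt (infEdist_le_edist_of_mem hw) (edist_lt_top a w)))
      exact hnu (by rw [← Set.compl_empty_iff.mp hUc]; exact hU'.1)
  have : (⨆ U' ∈ U, infEdist a U'ᶜ) ≤ F.sup (fun U' => infEdist a U'ᶜ) := by
    refine iSup₂_le fun U' hU' => ?_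
    by_cases haU : a ∈ U'
    · exact Finset.le_sup (f := fun U' => infEdist a U'ᶜ)
        (show U' ∈ F by rw [hF, Set.Finite.mem_toFinset]; exact ⟨hU', haU⟩)
    · rw [show infEdist a U'ᶜ = 0 from infEdist_zero_of_mem (Set.mem_compl haU)]
      exact zero_le
  rw [hsup] at this
  exact absurd (top_le_iff.mp this) hMlt.ne


/-- **Lemma (union).** Given open coverings `U` of `A` and `V` of `B`, both of multiplicity
at most `m`, with `mesh V ≤ L(U)/2`, there is an open covering `W` of `A ∪ B` of multiplicity
at most `m` with `mesh W ≤ max (mesh V) (mesh U)` and `L(W) ≥ min (L(U)/2) (L(V))`. -/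
theorem union_covering
    {Z : Type*} [MetricSpace Z] (A B : Set Z) (m : ℕ) (U V : Set (Set Z))
    (hUopen : IsOpenFamily U) (hUcov : IsCoveringOf U A)
    (hVopen : IsOpenFamily V) (hVcov : IsCoveringOf V B)
    (hUm : MultiplicityLE U m) (hVm : MultiplicityLE V m)
    (hmesh : meshF V ≤ lebesgueF U A / 2) :
    ∃ W : Set (Set Z), IsOpenFamily W ∧ IsCoveringOf W (A ∪ B) ∧ MultiplicityLE W m ∧
      meshF W ≤ max (meshF V) (meshF U) ∧
      min (lebesgueF U A / 2) (lebesgueF V B) ≤ lebesgueF W (A ∪ B) := by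
  classical
  rcases eq_or_ne (lebesgueF U A) ⊤ with hLtop | hLtop
  · rcases A.eq_empty_or_nonempty with hA | ⟨a, ha⟩
    · obtain ⟨W, h1, h2, h3, h4, h5⟩ := union_skeleton A B m U V hUopen hUcov hVopen hVcov
        hUm hVm ∅ isOpen_empty (by simp [hA]) (by simp)
      refine ⟨W, h1, h2, h3, h4, le_trans (le_min ?_ (min_le_right _ _)) h5⟩
      simp [hA]
    · have huniv : Set.univ ∈ U := exists_univ_mem hUm ha hLtop
      obtain ⟨W, h1, h2, h3, h4, h5⟩ := union_skeleton A B m U V hUopen hUcov hVopen hVcov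
        hUm hVm Set.univ isOpen_univ (Set.subset_univ A)
        (fun V' _ _ => ⟨Set.univ, huniv, Set.subset_univ V'⟩)
      refine ⟨W, h1, h2, h3, h4, le_trans (le_min ?_ (min_le_right _ _)) h5⟩
      refine le_trans le_top (le_iInf₂ fun z hz => le_min ?_ (by simp; exact infEdist_empty))
      calc (⊤ : ℝ≥0∞) = lebesgueF U A := hLtop.symm
        _ ≤ ⨆ U' ∈ U, infEdist z U'ᶜ := iInf₂_le z hz
  rcases eq_or_ne (lebesgueF U A) 0 with hL0 | hL0
  · -- degenerate case: mesh V = 0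
    have hmesh0 : meshF V = 0 := le_antisymm (by rw [hL0, ENNReal.zero_div] at hmesh; exact hmesh)
      (zero_le)
    have habs : ∀ V' ∈ V, (V' ∩ ⋃₀ U).Nonempty → ∃ U' ∈ U, V' ⊆ U' := by
      rintro V' hV' ⟨v, hvV, U', hU', hvU⟩
      refine ⟨U', hU', fun w hw => ?_⟩
      have : edist w v = 0 := by
        refine le_antisymm ?_ (zero_le)
        calc edist w v ≤ EMetric.diam V' := EMetric.edist_le_diam_of_mem hw hvV
          _ ≤ meshF V := le_iSup₂ (f := fun (V'' : Set Z) (_ : V'' ∈ V) => EMetric.diam V'') V' hV'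
          _ = 0 := hmesh0
      rwa [edist_eq_zero.mp this]
    obtain ⟨W, h1, h2, h3, h4, h5⟩ := union_skeleton A B m U V hUopen hUcov hVopen hVcov
      hUm hVm (⋃₀ U) (isOpen_sUnion hUopen) hUcov habs
    refine ⟨W, h1, h2, h3, h4, le_trans ?_ h5⟩
    rw [hL0, ENNReal.zero_div]
    simp
  -- main case: 0 < L < ⊤
  set L := lebesgueF U A with hLdef
  have hL2pos : 0 < L / 2 := ENNReal.div_pos hL0 (by norm_num)
  have hL2top : L / 2 ≠ ⊤ := by
    intro h
    exact hLtop (by simpa using (ENNReal.div_eq_top.mp h))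
  set N : Set Z := {z | infEdist z A < L / 2} with hNdef
  have hNopen : IsOpen N := isOpen_lt continuous_infEdist continuous_const
  have hAN : A ⊆ N := fun z hz => by
    simp only [hNdef, Set.mem_setOf_eq, infEdist_zero_of_mem hz]
    rw [show infEdist z A = 0 from infEdist_zero_of_mem hz]
    exact hL2pos
  have habs : ∀ V' ∈ V, (V' ∩ N).Nonempty → ∃ U' ∈ U, V' ⊆ U' := by
    rintro V' hV' ⟨v, hvV, hvN⟩
    rw [hNdef, Set.mem_setOf_eq] at hvN
    obtain ⟨a, haA, hva⟩ := infEdist_lt_iff.mp hvN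
    have hD : meshF V + edist v a < L := by
      calc meshF V + edist v a < L / 2 + L / 2 :=
        ENNReal.add_lt_add_of_le_of_lt (lt_of_le_of_lt hmesh (lt_top_iff_ne_top.mpr hL2top)).ne hmesh hva
        _ = L := ENNReal.add_halves L
    have hsup : L ≤ ⨆ U' ∈ U, infEdist a U'ᶜ := iInf₂_le a haA
    have : ∃ U' ∈ U, meshF V + edist v a < infEdist a U'ᶜ := by
      by_contra hcon
      push_neg at hcon
      exact absurd (le_trans hsup (iSup₂_le hcon)) (not_le.mpr hD)
    obtain ⟨U', hU', hdeep⟩ := this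
    refine ⟨U', hU', fun w hw => ?_⟩
    by_contra hwU
    have h1 : infEdist a U'ᶜ ≤ edist a w := infEdist_le_edist_of_mem (Set.mem_compl hwU)
    have h2 : edist a w ≤ meshF V + edist v a := by
      calc edist a w = edist w a := edist_comm a w
        _ ≤ edist w v + edist v a := edist_triangle w v a
        _ ≤ meshF V + edist v a := by
            gcongr
            calc edist w v ≤ EMetric.diam V' := EMetric.edist_le_diam_of_mem hw hvV
              _ ≤ meshF V := le_iSup₂ (f := fun (V'' : Set Z) (_ : V'' ∈ V) => EMetric.diam V'') V' hV'
    exact absurd (lt_of_le_of_lt (h1.trans h2) hdeep) (lt_irrefl _)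
  obtain ⟨W, h1, h2, h3, h4, h5⟩ := union_skeleton A B m U V hUopen hUcov hVopen hVcov
    hUm hVm N hNopen hAN habs
  refine ⟨W, h1, h2, h3, h4, le_trans (le_min ?_ (min_le_right _ _)) h5⟩
  refine le_trans (min_le_left _ _) (le_iInf₂ fun z hz => le_min ?_ ?_)
  · calc L / 2 ≤ L := ENNReal.half_le_self
      _ ≤ ⨆ U' ∈ U, infEdist z U'ᶜ := iInf₂_le z hz
  · refine le_infEdist.mpr fun w hw => ?_
    rw [hNdef, Set.mem_compl_iff, Set.mem_setOf_eq, not_lt] at hw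
    calc L / 2 ≤ infEdist w A := hw
      _ ≤ edist w z := infEdist_le_edist_of_mem hz
      _ = edist z w := edist_comm w z
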